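/- Let N ≥ 1, ε ∈ ℝ, λ ∈ ℝ with λ ≠ 0, and let r₁,…,r_N : ℝ² → ℝ be smooth functions of (x,s) with r_m(x,s) > 0 and r_m(x,s) − λ > 0 for all m and all (x,s). Suppose ∂_s r_i = [Π_{m=1}^N r_m^ε / r_i] ∂_x r_i for every i (the first negative commuting flow of the ε-system, with s = t₋₁). Define μ := Π_{m=1}^N (r_m − λ)^{−ε} and b₀ := Π_{m=1}^N r_m^{−ε}. Then ∂_s μ = ∂_x[μ/(λ b₀)] everywhere. -/

import Mathlib

open Real Set

/-- Partial derivative in the first variable. -/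
noncomputable def pdx (f : ℝ → ℝ → ℝ) (x t : ℝ) : ℝ := deriv (fun x' => f x' t) x

/-- Partial derivative in the second variable. -/
noncomputable def pdt (f : ℝ → ℝ → ℝ) (x t : ℝ) : ℝ := deriv (fun t' => f x t') t

/-- For the first negative commuting flow of the ε-system,
`∂ₛ rᵢ = [Π r_m^ε / rᵢ] ∂ₓ rᵢ`, the generating function `μ = Π (r_m − λ)^{−ε}`
satisfies `∂ₛ μ = ∂ₓ[μ/(λ b₀)]`, where `b₀ = Π r_m^{−ε}`. -/
theorem negative_flow_generating_function
    (N : ℕ) (hN : 1 ≤ N) (ε : ℝ) (l : ℝ) (hl : l ≠ 0)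
    (r : ℝ → ℝ → Fin N → ℝ)
    (hr : ContDiff ℝ (⊤ : ℕ∞) (fun p : ℝ × ℝ => r p.1 p.2))
    (hpos : ∀ (x s : ℝ) (m : Fin N), 0 < r x s m)
    (hpos' : ∀ (x s : ℝ) (m : Fin N), 0 < r x s m - l)
    (hsys : ∀ (i : Fin N) (x s : ℝ),
      pdt (fun x' s' => r x' s' i) x s
        = ((∏ m, (r x s m) ^ ε) / r x s i) * pdx (fun x' s' => r x' s' i) x s)
    (μ : ℝ → ℝ → ℝ)
    (hμ : ∀ x s : ℝ, μ x s = ∏ m, (r x s m - l) ^ (-ε))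
    (b0 : ℝ → ℝ → ℝ)
    (hb0 : ∀ x s : ℝ, b0 x s = ∏ m, (r x s m) ^ (-ε)) :
    ∀ x s : ℝ, pdt μ x s = pdx (fun x' s' => μ x' s' / (l * b0 x' s')) x s := by
  intro x s
  have hdiff : Differentiable ℝ (fun p : ℝ × ℝ => r p.1 p.2) := hr.differentiable (by simp)
  have hcomp : ∀ m : Fin N, Differentiable ℝ (fun p : ℝ × ℝ => r p.1 p.2 m) :=
    fun m => differentiable_pi.mp hdiff m
  -- derivatives of the components in each direction
  have hdx : ∀ m : Fin N, HasDerivAt (fun x' => r x' s m)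
      (deriv (fun x' => r x' s m) x) x := by
    intro m
    have : DifferentiableAt ℝ (fun x' => r x' s m) x :=
      by have h := ((hcomp m) (x, s)).comp x (differentiableAt_id.prodMk (differentiableAt_const s) : DifferentiableAt ℝ (fun x' : ℝ => (x', s)) x); exact h
    exact this.hasDerivAt
  have hdt : ∀ m : Fin N, HasDerivAt (fun s' => r x s' m)
      (deriv (fun s' => r x s' m) s) s := by
    intro m
    have : DifferentiableAt ℝ (fun s' => r x s' m) s :=
      ((hcomp m) (x, s)).comp s ((differentiableAt_const x).prodMk differentiableAt_id)
    exact this.hasDerivAt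
  set a : Fin N → ℝ := fun m => r x s m with ha
  set rx : Fin N → ℝ := fun m => deriv (fun x' => r x' s m) x with hrx
  set P : ℝ := ∏ m, (a m) ^ ε with hP
  have haa : ∀ m, a m ≠ 0 := fun m => ne_of_gt (hpos x s m)
  have hbb : ∀ m, a m - l ≠ 0 := fun m => ne_of_gt (hpos' x s m)
  have hsys' : ∀ m : Fin N, deriv (fun s' => r x s' m) s = (P / a m) * rx m :=
    fun m => hsys m x s
  -- t-derivative of μ
  have hμt : HasDerivAt (fun s' => ∏ m, (r x s' m - l) ^ (-ε))
      (∑ m, (∏ j ∈ Finset.univ.erase m, (a j - l) ^ (-ε)) •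
        (((P / a m) * rx m) * (-ε) * (a m - l) ^ (-ε - 1))) s := by
    apply HasDerivAt.fun_finsetProd
    intro m _
    have := ((hdt m).sub_const l).rpow_const (p := -ε) (Or.inl (hbb m))
    rwa [hsys' m] at this
  -- x-derivative of each factor of μ·Πr^ε
  have hψ : ∀ m : Fin N, HasDerivAt
      (fun x' => (r x' s m - l) ^ (-ε) * (r x' s m) ^ ε)
      ((rx m * (-ε) * (a m - l) ^ (-ε - 1)) * (a m) ^ ε
        + (a m - l) ^ (-ε) * (rx m * ε * (a m) ^ (ε - 1))) x := by
    intro m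
    exact (((hdx m).sub_const l).rpow_const (Or.inl (hbb m))).mul
      ((hdx m).rpow_const (Or.inl (haa m)))
  have hΦ : HasDerivAt (fun x' => l⁻¹ * ∏ m, ((r x' s m - l) ^ (-ε) * (r x' s m) ^ ε))
      (l⁻¹ * ∑ m, (∏ j ∈ Finset.univ.erase m, ((a j - l) ^ (-ε) * (a j) ^ ε)) •
        ((rx m * (-ε) * (a m - l) ^ (-ε - 1)) * (a m) ^ ε
          + (a m - l) ^ (-ε) * (rx m * ε * (a m) ^ (ε - 1)))) x :=
    (HasDerivAt.fun_finsetProd (fun m _ => hψ m)).const_mul l⁻¹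
  -- rewrite the RHS function
  have heq : (fun x' => μ x' s / (l * b0 x' s))
      = fun x' => l⁻¹ * ∏ m, ((r x' s m - l) ^ (-ε) * (r x' s m) ^ ε) := by
    funext x'
    rw [hμ, hb0, Finset.prod_mul_distrib]
    have h1 : (∏ m, (r x' s m) ^ (-ε)) * ∏ m, (r x' s m) ^ ε = 1 := by
      rw [← Finset.prod_mul_distrib]
      apply Finset.prod_eq_one
      intro m _
      rw [← Real.rpow_add (hpos x' s m)]
      simp
    have h2 : (∏ m, (r x' s m) ^ (-ε)) ≠ 0 := left_ne_zero_of_mul_eq_one h1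
    field_simp
    linear_combination (-∏ m, (r x' s m - l) ^ (-ε)) * h1
  unfold pdt pdx
  rw [show (fun t' => μ x t') = fun t' => ∏ m, (r x t' m - l) ^ (-ε) from
    funext fun t' => hμ x t', hμt.deriv, heq, hΦ.deriv, Finset.mul_sum]
  apply Finset.sum_congr rfl
  intro m _
  rw [smul_eq_mul, smul_eq_mul, Finset.prod_mul_distrib]
  have hPe : (∏ j ∈ Finset.univ.erase m, (a j) ^ ε) * (a m) ^ ε = P :=
    Finset.prod_erase_mul _ _ (Finset.mem_univ m)
  rw [← hPe]
  rw [show (-ε - 1 : ℝ) = -ε - 1 from rfl, Real.rpow_sub (hpos' x s m),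
    Real.rpow_sub (hpos x s m), Real.rpow_one, Real.rpow_one]
  have hb := hbb m; have haz := haa m
  simp only [ha] at hb haz ⊢
  field_simp
  ring
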